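/- Let ν_l be the non-standardized Student's t-density ν_l(x) = c_μ (1+x²)^{-(μ+1)/2} on ℝ with μ > 0 and normalizing constant c_μ, and let F be its CDF. Then F(x) ~ c_μ/(μ|x|^μ) as x → -∞, and 1 - F(x) ~ c_μ/(μ x^μ) as x → +∞. -/

import Mathlib

open MeasureTheory Real Set Filter

lemma aux_integrable {μ : ℝ} (hμ : 0 < μ) :
    Integrable (fun x : ℝ => (1 + x ^ 2) ^ (-(μ + 1) / 2)) := by
  have h := integrable_rpow_neg_one_add_norm_sq (E := ℝ) (μ := (volume : Measure ℝ))
      (r := μ + 1) (by simp; linarith)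
  simpa [Real.norm_eq_abs, sq_abs] using h

lemma aux_integral {μ : ℝ} (hμ : 0 < μ) :
    ∫ x : ℝ, (1 + x ^ 2) ^ (-(μ + 1) / 2) =
      Real.sqrt Real.pi * Real.Gamma (μ / 2) / Real.Gamma ((μ + 1) / 2) := by
  have hs : (0:ℝ) < (μ + 1) / 2 := by linarith
  set s : ℝ := (μ + 1) / 2 with hs_def
  have hexp : ∀ x : ℝ, (1 + x ^ 2) ^ (-(μ + 1) / 2) = (1 + x ^ 2) ^ (-s) := by
    intro x; rw [hs_def]; ring_nf
  -- inner integral formula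
  have inner : ∀ x : ℝ, ∫ t in Ioi (0:ℝ), t ^ (s - 1) * rexp (-((1 + x ^ 2) * t))
      = (1 + x ^ 2) ^ (-s) * Real.Gamma s := by
    intro x
    have h1 : (0:ℝ) < 1 + x ^ 2 := by positivity
    rw [Real.integral_rpow_mul_exp_neg_mul_Ioi hs h1]
    congr 1
    rw [one_div, Real.inv_rpow h1.le, ← Real.rpow_neg h1.le]
  have innerInt : ∀ x : ℝ,
      IntegrableOn (fun t : ℝ => t ^ (s - 1) * rexp (-((1 + x ^ 2) * t))) (Ioi 0) := by
    intro x
    have h1 : (0:ℝ) < 1 + x ^ 2 := by positivity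
    have h := integrableOn_rpow_mul_exp_neg_mul_rpow (s := s - 1) (p := 1) (b := 1 + x ^ 2)
      (by linarith) zero_lt_one h1
    refine h.congr_fun (fun t _ => ?_) measurableSet_Ioi
    beta_reduce
    rw [Real.rpow_one, neg_mul]
  -- product integrability
  have hmeas : AEStronglyMeasurable
      (fun p : ℝ × ℝ => p.2 ^ (s - 1) * rexp (-((1 + p.1 ^ 2) * p.2)))
      ((volume : Measure ℝ).prod ((volume : Measure ℝ).restrict (Ioi 0))) := by
    apply Measurable.aestronglyMeasurable
    fun_prop
  have normint : ∀ x : ℝ,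
      (∫ t in Ioi (0:ℝ), ‖t ^ (s - 1) * rexp (-((1 + x ^ 2) * t))‖)
        = (1 + x ^ 2) ^ (-s) * Real.Gamma s := by
    intro x
    rw [← inner x]
    refine setIntegral_congr_fun measurableSet_Ioi fun t ht => ?_
    have ht' : (0:ℝ) < t := ht
    rw [Real.norm_eq_abs, abs_of_nonneg (mul_nonneg (Real.rpow_nonneg ht'.le _) (Real.exp_pos _).le)]
  have ΦInt : Integrable (fun p : ℝ × ℝ => p.2 ^ (s - 1) * rexp (-((1 + p.1 ^ 2) * p.2)))
      ((volume : Measure ℝ).prod ((volume : Measure ℝ).restrict (Ioi 0))) := by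
    rw [integrable_prod_iff hmeas]
    constructor
    · exact Filter.Eventually.of_forall fun x => innerInt x
    · refine (Integrable.congr ((aux_integrable hμ).mul_const (Real.Gamma s)) ?_)
      refine Filter.Eventually.of_forall fun x => ?_
      simp only
      rw [hexp x]
      exact (normint x).symm
  have swap := integral_integral_swap (f := fun x t : ℝ => t ^ (s - 1) * rexp (-((1 + x ^ 2) * t)))
    (μ := (volume : Measure ℝ)) (ν := (volume : Measure ℝ).restrict (Ioi 0)) ΦInt
  -- LHS
  have lhs_eq : (∫ x : ℝ, ∫ t in Ioi (0:ℝ), t ^ (s - 1) * rexp (-((1 + x ^ 2) * t)))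
      = (∫ x : ℝ, (1 + x ^ 2) ^ (-s)) * Real.Gamma s := by
    simp_rw [inner]
    exact integral_mul_const _ _
  -- gaussian computation
  have gauss : ∀ t ∈ Ioi (0:ℝ),
      (∫ x : ℝ, t ^ (s - 1) * rexp (-((1 + x ^ 2) * t)))
        = Real.sqrt Real.pi * (rexp (-t) * t ^ (μ / 2 - 1)) := by
    intro t ht
    have ht' : (0:ℝ) < t := ht
    have step : ∀ x : ℝ, t ^ (s - 1) * rexp (-((1 + x ^ 2) * t))
        = (t ^ (s - 1) * rexp (-t)) * rexp (-t * x ^ 2) := by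
      intro x
      rw [mul_assoc, ← Real.exp_add]
      congr 2
      ring
    simp_rw [step]
    rw [integral_const_mul, integral_gaussian]
    rw [show Real.pi / t = Real.pi * t⁻¹ by ring, Real.sqrt_mul Real.pi_pos.le,
      Real.sqrt_inv, Real.sqrt_eq_rpow t, ← Real.rpow_neg ht'.le]
    rw [show t ^ (s-1) * rexp (-t) * (Real.sqrt Real.pi * t ^ (-(1/2):ℝ))
        = Real.sqrt Real.pi * (rexp (-t) * (t ^ (s-1) * t ^ (-(1/2):ℝ))) by ring]
    rw [← Real.rpow_add ht']
    congr 2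
    rw [hs_def]; ring_nf
  have rhs_eq : (∫ t in Ioi (0:ℝ), ∫ x : ℝ, t ^ (s - 1) * rexp (-((1 + x ^ 2) * t)))
      = Real.sqrt Real.pi * Real.Gamma (μ / 2) := by
    rw [setIntegral_congr_fun measurableSet_Ioi gauss, integral_const_mul]
    congr 1
    rw [Real.Gamma_eq_integral (by positivity : (0:ℝ) < μ / 2)]
  have hG : (0:ℝ) < Real.Gamma s := Real.Gamma_pos_of_pos hs
  have key : (∫ x : ℝ, (1 + x ^ 2) ^ (-s)) * Real.Gamma s
      = Real.sqrt Real.pi * Real.Gamma (μ / 2) := by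
    rw [← lhs_eq, swap, rhs_eq]
  simp_rw [hexp]
  rw [eq_div_iff hG.ne', key]

lemma aux_ratio {c x : ℝ} (hx : x ≠ 0) :
    (1 + x ^ 2) ^ (-c) * (x ^ 2) ^ c = (1 + (x⁻¹) ^ 2) ^ (-c) := by
  have h1 : (0:ℝ) < 1 + x ^ 2 := by positivity
  rw [Real.rpow_neg h1.le, ← Real.inv_rpow h1.le, ← Real.mul_rpow (by positivity) (sq_nonneg x)]
  have : (1 + x ^ 2)⁻¹ * x ^ 2 = (1 + (x⁻¹) ^ 2)⁻¹ := by
    field_simp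
    ring
  rw [this, Real.inv_rpow (by positivity), ← Real.rpow_neg (by positivity)]

lemma aux_inv_atBot : Tendsto (fun x : ℝ => x⁻¹) atBot (nhds 0) := by
  have h2 := ((tendsto_inv_atTop_zero (𝕜 := ℝ)).comp (tendsto_neg_atBot_atTop (G := ℝ))).neg
  simp only [Function.comp_def, inv_neg, neg_neg, neg_zero] at h2
  exact h2

lemma aux_tendsto_ratio (c : ℝ) {l : Filter ℝ} (h : Tendsto (fun x : ℝ => x⁻¹) l (nhds 0)) :
    Tendsto (fun x : ℝ => (1 + (x⁻¹) ^ 2) ^ (-c)) l (nhds 1) := by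
  have h1 : Tendsto (fun x : ℝ => 1 + (x⁻¹) ^ 2) l (nhds 1) := by
    have := (h.pow 2)
    simpa using tendsto_const_nhds.add this
  have := h1.rpow_const (p := -c) (Or.inl one_ne_zero)
  simpa using this

theorem stmt_2 (μ cμ : ℝ) (hμ : 0 < μ)
    (hc : cμ = Real.Gamma ((μ+1)/2) / (Real.Gamma (μ/2) * Real.sqrt Real.pi))
    (ν : ℝ → ℝ) (hν : ∀ x, ν x = cμ * (1 + x^2) ^ (-(μ+1)/2))
    (F : ℝ → ℝ) (hF : ∀ x, F x = ∫ t in Set.Iic x, ν t) :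
    Tendsto (fun x => F x / (cμ / (μ * |x| ^ μ))) atBot (nhds 1) ∧
    Tendsto (fun x => (1 - F x) / (cμ / (μ * x ^ μ))) atTop (nhds 1) := by
  have hG1 : (0:ℝ) < Real.Gamma ((μ+1)/2) := Real.Gamma_pos_of_pos (by linarith)
  have hG2 : (0:ℝ) < Real.Gamma (μ/2) := Real.Gamma_pos_of_pos (by positivity)
  have hsπ : (0:ℝ) < Real.sqrt Real.pi := Real.sqrt_pos.2 Real.pi_pos
  have hcpos : 0 < cμ := by rw [hc]; positivity
  have hν_cont : Continuous ν := by
    have : Continuous fun x : ℝ => cμ * (1 + x^2) ^ (-(μ+1)/2) := by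
      refine Continuous.mul continuous_const ?_
      exact (continuous_const.add (continuous_pow 2)).rpow_const
        (fun x => Or.inl (by simp only [Pi.add_apply]; positivity))
    exact (funext hν : ν = _) ▸ this
  have hν_int : Integrable ν := by
    have := (aux_integrable hμ).const_mul cμ
    exact (funext hν : ν = _) ▸ this
  have hν_total : ∫ x, ν x = 1 := by
    rw [funext hν, integral_const_mul, aux_integral hμ, hc]
    field_simp
  -- derivative of F
  have hFd : ∀ x, HasDerivAt F (ν x) x := by
    intro x
    have key : ∀ y, F y = F 0 + ∫ t in (0:ℝ)..y, ν t := by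
      intro y
      have h := intervalIntegral.integral_Iic_sub_Iic (hν_int.integrableOn (s := Iic 0))
        (hν_int.integrableOn (s := Iic y))
      rw [hF y, hF 0]
      linarith [h]
    have hd : HasDerivAt (fun y => F 0 + ∫ t in (0:ℝ)..y, ν t) (ν x) x := by
      refine HasDerivAt.const_add _ ?_
      exact intervalIntegral.integral_hasDerivAt_right (hν_int.intervalIntegrable)
        hν_cont.stronglyMeasurable.stronglyMeasurableAtFilter hν_cont.continuousAt
    exact hd.congr_of_eventuallyEq (Filter.Eventually.of_forall key)
  -- limits of F
  have hFtop : Tendsto F atTop (nhds 1) := by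
    have h1 : Tendsto (fun x : ℝ => ∫ t in Iic x, ν t) atTop
        (nhds (∫ t in ⋃ x : ℝ, Iic x, ν t)) :=
      tendsto_setIntegral_of_monotone (fun _ => measurableSet_Iic)
        (fun a b hab => Iic_subset_Iic.2 hab) (by rw [iUnion_Iic]; exact hν_int.integrableOn)
    rw [iUnion_Iic, Measure.restrict_univ, hν_total] at h1
    exact h1.congr (fun x => (hF x).symm)
  have hFbot : Tendsto F atBot (nhds 0) := by
    have h1 : Tendsto (fun x : ℝ => ∫ t in Iic (-x), ν t) atTop
        (nhds (∫ t in ⋂ x : ℝ, Iic (-x), ν t)) :=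
      tendsto_setIntegral_of_antitone (fun _ => measurableSet_Iic)
        (fun a b hab => Iic_subset_Iic.2 (by linarith)) ⟨0, hν_int.integrableOn⟩
    have hempty : (⋂ x : ℝ, Iic (-x)) = ∅ := by
      ext t
      simp only [mem_iInter, mem_Iic, mem_empty_iff_false, iff_false, not_forall, not_le]
      exact ⟨-t + 1, by linarith⟩
    rw [hempty] at h1
    simp only [Measure.restrict_empty, integral_zero_measure] at h1
    have h2 := h1.comp tendsto_neg_atBot_atTop
    have : Tendsto (fun x : ℝ => ∫ t in Iic x, ν t) atBot (nhds 0) := by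
      refine h2.congr fun x => ?_
      simp [Function.comp]
    exact this.congr (fun x => (hF x).symm)
  constructor
  · -- atBot
    set c : ℝ := (μ + 1) / 2 with hc_def
    have hevneg : ∀ᶠ x : ℝ in atBot, x < 0 := eventually_lt_atBot 0
    refine HasDerivAt.lhopital_zero_atBot (f' := ν)
      (g' := fun x => cμ * (-x) ^ (-(μ+1))) ?_ ?_ ?_ hFbot ?_ ?_
    · exact Filter.Eventually.of_forall fun x => hFd x
    · filter_upwards [hevneg] with x hx
      have hx0 : (0:ℝ) < -x := by linarith
      have hbase : HasDerivAt (fun y : ℝ => (cμ/μ) * (-y) ^ (-μ))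
          (cμ * (-x) ^ (-(μ+1))) x := by
        have h1 : HasDerivAt (fun z : ℝ => z ^ (-μ)) (-μ * (-x) ^ (-μ - 1)) (-x) :=
          Real.hasDerivAt_rpow_const (Or.inl hx0.ne')
        have h2 : HasDerivAt (fun y : ℝ => -y) (-1) x := hasDerivAt_neg x
        have h3 := HasDerivAt.comp x h1 h2
        have h4 := h3.const_mul (cμ/μ)
        refine h4.congr_deriv ?_
        rw [show -μ - 1 = -(μ+1) by ring]
        field_simp
      refine hbase.congr_of_eventuallyEq ?_
      filter_upwards [Iio_mem_nhds (show x < (0:ℝ) from hx)] with y hy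
      have hy0 : (0:ℝ) < -y := by simpa using (hy : y ∈ Iio (0:ℝ))
      rw [abs_of_neg (by linarith : y < 0), Real.rpow_neg hy0.le, div_mul_eq_div_div,
        div_eq_mul_inv]
    · filter_upwards [hevneg] with x hx
      have hx0 : (0:ℝ) < -x := by linarith
      positivity
    · -- g tends to 0
      have habs : Tendsto (fun x : ℝ => |x|) atBot atTop := tendsto_abs_atBot_atTop
      have h1 : Tendsto (fun x : ℝ => |x| ^ (-μ)) atBot (nhds 0) :=
        (tendsto_rpow_neg_atTop hμ).comp habs
      have h2 : Tendsto (fun x : ℝ => (cμ/μ) * |x| ^ (-μ)) atBot (nhds 0) := by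
        simpa using h1.const_mul (cμ/μ)
      refine h2.congr fun x => ?_
      rw [Real.rpow_neg (abs_nonneg x), div_mul_eq_div_div, div_eq_mul_inv]
      ring
    · -- ratio of derivatives
      have hmain := aux_tendsto_ratio ((μ+1)/2) (l := atBot) aux_inv_atBot
      refine hmain.congr' ?_
      filter_upwards [hevneg] with x hx
      have hx0 : (0:ℝ) < -x := by linarith
      have hxpow : (0:ℝ) < (-x) ^ (-(μ+1)) := Real.rpow_pos_of_pos hx0 _
      rw [hν x]
      have hsq : ((-x) : ℝ) ^ (2:ℕ) = x ^ 2 := by ring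
      have hpow : ((-x) : ℝ) ^ (μ+1) = (x ^ 2) ^ ((μ+1)/2) := by
        rw [← hsq, ← Real.rpow_natCast (-x) 2, ← Real.rpow_mul hx0.le]
        norm_num
        congr 1
        ring
      rw [eq_comm, div_eq_iff (by positivity : cμ * (-x) ^ (-(μ+1)) ≠ 0)]
      rw [← aux_ratio (show x ≠ 0 by linarith), ← hpow]
      rw [Real.rpow_neg hx0.le (μ+1)]
      field_simp
  · -- atTop
    have hevpos : ∀ᶠ x : ℝ in atTop, 0 < x := eventually_gt_atTop 0
    refine HasDerivAt.lhopital_zero_atTop (f' := fun x => -ν x)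
      (g' := fun x => -cμ * x ^ (-(μ+1))) ?_ ?_ ?_ ?_ ?_ ?_
    · exact Filter.Eventually.of_forall fun x => (hFd x).const_sub 1
    · filter_upwards [hevpos] with x hx
      have hbase : HasDerivAt (fun y : ℝ => (cμ/μ) * y ^ (-μ))
          (-cμ * x ^ (-(μ+1))) x := by
        have h1 : HasDerivAt (fun z : ℝ => z ^ (-μ)) (-μ * x ^ (-μ - 1)) x :=
          Real.hasDerivAt_rpow_const (Or.inl hx.ne')
        have h4 := h1.const_mul (cμ/μ)
        refine h4.congr_deriv ?_
        rw [show -μ - 1 = -(μ+1) by ring]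
        field_simp
      refine hbase.congr_of_eventuallyEq ?_
      filter_upwards [Ioi_mem_nhds (show (0:ℝ) < x from hx)] with y hy
      have hy0 : (0:ℝ) < y := hy
      rw [Real.rpow_neg hy0.le, div_mul_eq_div_div, div_eq_mul_inv]
    · filter_upwards [hevpos] with x hx
      have : (0:ℝ) < x ^ (-(μ+1)) := Real.rpow_pos_of_pos hx _
      intro hcon
      nlinarith
    · simpa using hFtop.const_sub 1
    · have h1 : Tendsto (fun x : ℝ => x ^ (-μ)) atTop (nhds 0) := tendsto_rpow_neg_atTop hμ
      have h2 : Tendsto (fun x : ℝ => (cμ/μ) * x ^ (-μ)) atTop (nhds 0) := by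
        simpa using h1.const_mul (cμ/μ)
      refine h2.congr' ?_
      filter_upwards [hevpos] with x hx
      rw [Real.rpow_neg hx.le, div_mul_eq_div_div, div_eq_mul_inv]
      ring
    · have hmain := aux_tendsto_ratio ((μ+1)/2) (l := atTop) tendsto_inv_atTop_zero
      refine hmain.congr' ?_
      filter_upwards [hevpos] with x hx
      have hxpow : (0:ℝ) < x ^ (-(μ+1)) := Real.rpow_pos_of_pos hx _
      rw [hν x]
      have hpow : x ^ (μ+1) = (x ^ 2) ^ ((μ+1)/2) := by
        rw [← Real.rpow_natCast x 2, ← Real.rpow_mul hx.le]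
        norm_num
        congr 1
        ring
      rw [eq_comm, div_eq_iff (mul_neg_of_neg_of_pos (neg_lt_zero.mpr hcpos) hxpow).ne]
      rw [← aux_ratio hx.ne', ← hpow]
      rw [Real.rpow_neg hx.le (μ+1)]
      field_simp
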